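/- D_B(f_1,...,f_r) equals secat_B(Π̃_{r,Y}), where Π̃_{r,Y} : P_B(f_1,...,f_r) → X is the pullback along (f_1,...,f_r) : X → Y_B^r of the fibrewise evaluation fibration Π_{r,Y} : P_B(Y) → Y_B^r. -/

import Mathlib

open Set

/-- Two continuous maps are fibrewise homotopic over `B`: there is a homotopy
whose every time-slice commutes with the projections to `B`. -/
def FibHomotopic {B X Y : Type*} [TopologicalSpace B] [TopologicalSpace X] [TopologicalSpace Y]
    (pX : X → B) (pY : Y → B) (f g : C(X, Y)) : Prop :=
  ∃ H : f.Homotopy g, ∀ (x : X) (t : unitInterval), pY (H (t, x)) = pX x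

/-- Sequential parametrized homotopic distance of a family of fibrewise maps:
the least `n` such that `X` admits an open cover by `n + 1` open sets on each of
which all the maps are pairwise fibrewise homotopic (`∞` if none exists). -/
noncomputable def fibDist {B X Y ι : Type*} [TopologicalSpace B] [TopologicalSpace X]
    [TopologicalSpace Y] (pX : X → B) (pY : Y → B) (f : ι → C(X, Y)) : ℕ∞ :=
  sInf {n : ℕ∞ | ∃ k : ℕ, (k : ℕ∞) = n ∧ ∃ U : Fin (k + 1) → Set X,
    (∀ i, IsOpen (U i)) ∧ (⋃ i, U i) = Set.univ ∧
    ∀ i s t, FibHomotopic (fun x : U i => pX (x : X)) pY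
      ((f s).restrict (U i)) ((f t).restrict (U i))}

/-- Fibrewise sectional category of a fibrewise map `f : E → X` over `B`: the least `k`
such that `X` has an open cover by `k + 1` open sets, each admitting a fibrewise map
`s : U → E` with `f ∘ s` fibrewise homotopic to the inclusion. -/
noncomputable def fibSecat {B E X : Type*} [TopologicalSpace B] [TopologicalSpace E]
    [TopologicalSpace X] (pE : E → B) (pX : X → B) (f : C(E, X)) : ℕ∞ :=
  sInf {n : ℕ∞ | ∃ k : ℕ, (k : ℕ∞) = n ∧ ∃ U : Fin (k + 1) → Set X,
    (∀ i, IsOpen (U i)) ∧ (⋃ i, U i) = Set.univ ∧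
    ∀ i, ∃ s : C(U i, E), (∀ x : U i, pE (s x) = pX (x : X)) ∧
      FibHomotopic (fun x : U i => pX (x : X)) pX (f.comp s)
        ⟨Subtype.val, continuous_subtype_val⟩}

/-- The fibrewise free path space of `Y` over `B`: pairs `(b, γ)` with `p_Y ∘ γ`
constant at `b`. -/
abbrev FibPathSpace {B Y : Type*} [TopologicalSpace B] [TopologicalSpace Y] (pY : Y → B) :
    Type _ := {z : B × C(unitInterval, Y) // ∀ t, pY (z.2 t) = z.1}

/-- The `r`-fold fibred product of `Y` over `B`. -/
abbrev FibPow {B Y : Type*} [TopologicalSpace B] [TopologicalSpace Y] (pY : Y → B) (r : ℕ) :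
    Type _ := {v : Fin r → Y // ∀ i j, pY (v i) = pY (v j)}

/-- The time `i / (r - 1)` in the unit interval. -/
noncomputable def evalTime (r : ℕ) (i : Fin r) : unitInterval :=
  ⟨(i : ℝ) / ((r : ℝ) - 1), by
    have h1 : 1 ≤ r := Nat.one_le_iff_ne_zero.mpr (by rintro rfl; exact i.elim0)
    have h0 : (0:ℝ) ≤ (r:ℝ) - 1 := by
      have : (1:ℝ) ≤ (r:ℝ) := by exact_mod_cast h1
      linarith
    have hi : (i:ℝ) ≤ (r:ℝ) - 1 := by
      have h2 : ((i:ℕ):ℝ) ≤ ((r - 1 : ℕ):ℝ) := Nat.cast_le.mpr (by omega)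
      rwa [Nat.cast_sub h1, Nat.cast_one] at h2
    exact ⟨div_nonneg (by positivity) h0, div_le_one_of_le₀ hi h0⟩⟩

/-- The fibrewise evaluation fibration `Π_{r,Y} : P_B(Y) → Y_B^r`, sending `(b, γ)` to
`(γ(0), γ(1/(r-1)), …, γ(1))`. -/
noncomputable def fibPi {B Y : Type*} [TopologicalSpace B] [TopologicalSpace Y] (pY : Y → B)
    (r : ℕ) : C(FibPathSpace pY, FibPow pY r) :=
  ⟨fun z => ⟨fun i => z.1.2 (evalTime r i),
      fun i j => (z.2 (evalTime r i)).trans (z.2 (evalTime r j)).symm⟩, by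
    apply Continuous.subtype_mk
    exact continuous_pi fun i =>
      (continuous_eval_const (evalTime r i)).comp
        (continuous_snd.comp continuous_subtype_val)⟩

/-- The `i`-th projection `Y_B^r → Y`. -/
def fibPrj {B Y : Type*} [TopologicalSpace B] [TopologicalSpace Y] (pY : Y → B) (r : ℕ)
    (i : Fin r) : C(FibPow pY r, Y) :=
  ⟨fun v => v.1 i, ((continuous_apply i).comp continuous_subtype_val)⟩

theorem fibSection {B X Y : Type*} [TopologicalSpace B] [TopologicalSpace X] [TopologicalSpace Y]
    (r : ℕ) (hr : 2 ≤ r) (pX : X → B) (pY : Y → B)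
    (f : Fin r → C(X, Y)) (U : Set X)
    (hU : ∀ a b : Fin r, FibHomotopic (fun x : U => pX (x : X)) pY
      ((f a).restrict U) ((f b).restrict U)) :
    ∃ G : C(U × unitInterval, Y),
      (∀ x t, pY (G (x, t)) = pX (x : X)) ∧
      (∀ x (i : Fin r), G (x, evalTime r i) = f i (x : X)) := by
  obtain ⟨m, rfl⟩ : ∃ m, r = m + 1 := ⟨r - 1, by omega⟩
  have hm1 : 1 ≤ m := by omega
  have hm0 : (0:ℝ) < (m:ℝ) := by exact_mod_cast hm1
  -- choose the chain of homotopies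
  have hH : ∀ k : Fin m, ∃ H : ((f k.castSucc).restrict U).Homotopy ((f k.succ).restrict U),
      ∀ (x : U) (t : unitInterval), pY (H (t, x)) = pX (x : X) := fun k => hU _ _
  choose H hHp using hH
  -- index of the segment containing t
  let idx : unitInterval → Fin m := fun t =>
    ⟨min (⌊(t:ℝ) * m⌋₊) (m - 1), lt_of_le_of_lt (min_le_right _ _) (by omega)⟩
  let hFun : Fin m → U × unitInterval → Y := fun k p =>
    H k (Set.projIcc 0 1 zero_le_one ((p.2:ℝ) * m - (k.1:ℝ)), p.1)
  let gFun : U × unitInterval → Y := fun p => hFun (idx p.2) p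
  have hcontk : ∀ k, Continuous (hFun k) := fun k =>
    (H k).continuous.comp (Continuous.prodMk
      (continuous_projIcc.comp
        (((continuous_subtype_val.comp continuous_snd).mul continuous_const).sub
          continuous_const))
      continuous_fst)
  -- closed cover
  let C : Fin m → Set (U × unitInterval) := fun k =>
    (fun p : U × unitInterval => ((p.2 : ℝ))) ⁻¹' Icc ((k.1:ℝ)/m) (((k.1:ℝ)+1)/m)
  have hCc : ∀ k, IsClosed (C k) := fun k =>
    IsClosed.preimage (continuous_subtype_val.comp continuous_snd) isClosed_Icc
  have hidx_low : ∀ t : unitInterval, ((idx t).1 : ℝ) ≤ (t:ℝ) * m := by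
    intro t
    have h1 : ((idx t).1 : ℝ) ≤ (⌊(t:ℝ) * m⌋₊ : ℝ) := by
      exact_mod_cast min_le_left _ _
    exact h1.trans (Nat.floor_le (mul_nonneg t.2.1 hm0.le))
  have hidx_high : ∀ t : unitInterval, (t:ℝ) * m ≤ ((idx t).1 : ℝ) + 1 := by
    intro t
    by_cases hc : ⌊(t:ℝ) * m⌋₊ ≤ m - 1
    · have hv : (idx t).1 = ⌊(t:ℝ) * m⌋₊ := min_eq_left hc
      rw [hv]
      exact (Nat.lt_floor_add_one _).le
    · have hv : (idx t).1 = m - 1 := min_eq_right (by omega)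
      have ht1 : (t:ℝ) * m ≤ m := by nlinarith [t.2.2, hm0]
      rw [hv]
      have : ((m - 1 : ℕ) : ℝ) + 1 = (m:ℝ) := by
        push_cast [Nat.cast_sub hm1]; ring
      rw [this]; exact ht1
  have hcov : ⋃ k, C k = univ := by
    apply eq_univ_of_forall
    intro p
    refine mem_iUnion.mpr ⟨idx p.2, ?_, ?_⟩
    · exact (div_le_iff₀ hm0).mpr (hidx_low p.2)
    · exact (le_div_iff₀ hm0).mpr (hidx_high p.2)
  have heq : ∀ k, EqOn gFun (hFun k) (C k) := by
    rintro k ⟨x, τ⟩ hp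
    obtain ⟨h1, h2⟩ := hp
    simp only at h1 h2
    have hb1 : (k.1:ℝ) ≤ (τ:ℝ) * m := (div_le_iff₀ hm0).mp h1
    have hb2 : (τ:ℝ) * m ≤ (k.1:ℝ) + 1 := (le_div_iff₀ hm0).mp h2
    have hn1 : k.1 ≤ ⌊(τ:ℝ) * m⌋₊ := Nat.le_floor (by exact_mod_cast hb1)
    have hn2 : (⌊(τ:ℝ) * m⌋₊ : ℝ) ≤ (τ:ℝ) * m := Nat.floor_le (mul_nonneg τ.2.1 hm0.le)
    have hn3 : ⌊(τ:ℝ) * m⌋₊ ≤ k.1 + 1 := by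
      have := hn2.trans hb2
      exact_mod_cast this
    have hcases : ⌊(τ:ℝ) * m⌋₊ = k.1 ∨ ⌊(τ:ℝ) * m⌋₊ = k.1 + 1 := by omega
    rcases hcases with hc | hc
    · have hik : idx τ = k := Fin.ext (by
        show min (⌊(τ:ℝ) * m⌋₊) (m-1) = k.1
        have := k.2; omega)
      show gFun (x, τ) = hFun k (x, τ)
      simp only [gFun]; rw [hik]
    · have htm : (τ:ℝ) * m = (k.1:ℝ) + 1 := by
        refine le_antisymm hb2 ?_
        have : ((k.1 + 1 : ℕ) : ℝ) ≤ (τ:ℝ) * m := hc ▸ hn2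
        exact_mod_cast this
      by_cases hl : k.1 + 1 ≤ m - 1
      · have hlt : k.1 + 1 < m := by omega
        have hik : idx τ = ⟨k.1 + 1, hlt⟩ := Fin.ext (by
          show min (⌊(τ:ℝ) * m⌋₊) (m-1) = k.1 + 1
          omega)
        show gFun (x, τ) = hFun k (x, τ)
        simp only [gFun, hFun]; rw [hik]
        rw [show ((⟨k.1 + 1, hlt⟩ : Fin m) : ℕ) = k.1 + 1 from rfl]
        have e1 : Set.projIcc (0:ℝ) 1 zero_le_one
            ((τ:ℝ) * m - ((k.1 + 1 : ℕ) : ℝ)) = 0 := by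
          apply Subtype.ext
          rw [Set.coe_projIcc]
          show max 0 (min 1 ((τ:ℝ)*m - ((k.1+1 : ℕ):ℝ))) = ((0:unitInterval):ℝ)
          push_cast
          rw [htm]
          norm_num
        have e2 : Set.projIcc (0:ℝ) 1 zero_le_one ((τ:ℝ) * m - (k.1 : ℝ)) = 1 := by
          apply Subtype.ext
          rw [Set.coe_projIcc, htm]
          show max 0 (min 1 (((k.1:ℝ)+1) - (k.1:ℝ))) = ((1:unitInterval):ℝ)
          norm_num
        rw [e1, e2, (H _).apply_zero, (H _).apply_one]
        have hfin : (⟨k.1+1, hlt⟩ : Fin m).castSucc = k.succ := Fin.ext rfl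
        rw [hfin]
      · have hik : idx τ = k := Fin.ext (by
          show min (⌊(τ:ℝ) * m⌋₊) (m-1) = k.1
          have := k.2; omega)
        show gFun (x, τ) = hFun k (x, τ)
        simp only [gFun]; rw [hik]
  have hgc : Continuous gFun :=
    LocallyFinite.continuous (locallyFinite_of_finite C) hcov hCc
      (fun k => (hcontk k).continuousOn.congr (heq k))
  refine ⟨⟨gFun, hgc⟩, fun x t => hHp (idx t) x _, ?_⟩
  intro x i
  have hte : ((evalTime (m+1) i : unitInterval):ℝ) * m = (i.1:ℝ) := by
    show ((i.1:ℝ) / ((((m:ℕ)+1 : ℕ):ℝ) - 1)) * m = (i.1:ℝ)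
    push_cast
    field_simp
    rw [add_sub_cancel_right, mul_div_assoc, div_self hm0.ne', mul_one]
  have hfl : ⌊((evalTime (m+1) i : unitInterval):ℝ) * m⌋₊ = i.1 := by
    rw [hte]; exact Nat.floor_natCast _
  have him : i.1 ≤ m := by omega
  show gFun (x, evalTime (m+1) i) = f i (x:X)
  by_cases hc : i.1 ≤ m - 1
  · have hlt : i.1 < m := by omega
    have hik : idx (evalTime (m+1) i) = ⟨i.1, hlt⟩ := Fin.ext (by
      show min (⌊((evalTime (m+1) i : unitInterval):ℝ) * m⌋₊) (m-1) = i.1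
      omega)
    simp only [gFun, hFun]; rw [hik]
    have e1 : Set.projIcc (0:ℝ) 1 zero_le_one
        (((evalTime (m+1) i : unitInterval):ℝ) * m - ((i.1 : ℕ) : ℝ)) = 0 := by
      apply Subtype.ext
      rw [Set.coe_projIcc]
      show max 0 (min 1 (((evalTime (m+1) i : unitInterval):ℝ)*m - (i.1:ℝ)))
        = ((0:unitInterval):ℝ)
      rw [hte]
      norm_num
    have hfin : (⟨i.1, hlt⟩ : Fin m).castSucc = i := Fin.ext rfl
    rw [e1, (H _).apply_zero, hfin]
    rfl
  · have him' : i.1 = m := by omega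
    have hlt : m - 1 < m := by omega
    have hik : idx (evalTime (m+1) i) = ⟨m-1, hlt⟩ := Fin.ext (by
      show min (⌊((evalTime (m+1) i : unitInterval):ℝ) * m⌋₊) (m-1) = m - 1
      omega)
    simp only [gFun, hFun]; rw [hik]
    rw [show ((⟨m - 1, hlt⟩ : Fin m) : ℕ) = m - 1 from rfl]
    have e1 : Set.projIcc (0:ℝ) 1 zero_le_one
        (((evalTime (m+1) i : unitInterval):ℝ) * m - ((m - 1 : ℕ) : ℝ)) = 1 := by
      apply Subtype.ext
      rw [Set.coe_projIcc]
      show max 0 (min 1 (((evalTime (m+1) i : unitInterval):ℝ)*m - ((m-1:ℕ):ℝ)))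
        = ((1:unitInterval):ℝ)
      rw [hte, him']
      push_cast [Nat.cast_sub hm1]
      norm_num
    have hfin : (⟨m-1, hlt⟩ : Fin m).succ = i := Fin.ext (by simp [Fin.val_succ]; omega)
    rw [e1, (H _).apply_one, hfin]
    rfl

theorem fib_key {B X Y : Type*} [TopologicalSpace B] [TopologicalSpace X] [TopologicalSpace Y]
    (r : ℕ) (hr : 2 ≤ r) (pX : X → B) (pY : Y → B) (hpX : Continuous pX)
    (f : Fin r → C(X, Y)) (hf : ∀ i x, pY (f i x) = pX x) (U : Set X) :
    (∀ a b : Fin r, FibHomotopic (fun x : U => pX (x:X)) pY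
        ((f a).restrict U) ((f b).restrict U))
    ↔ ∃ s : C(U, {w : X × FibPathSpace pY // ∀ i : Fin r, f i w.1 = w.2.1.2 (evalTime r i)}),
        (∀ x : U, (fun w : {w : X × FibPathSpace pY //
            ∀ i : Fin r, f i w.1 = w.2.1.2 (evalTime r i)} => pX w.1.1) (s x) = pX (x:X)) ∧
        FibHomotopic (fun x : U => pX (x:X)) pX
          ((⟨fun w => w.1.1, continuous_fst.comp continuous_subtype_val⟩ :
              C({w : X × FibPathSpace pY //
                ∀ i : Fin r, f i w.1 = w.2.1.2 (evalTime r i)}, X)).comp s)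
          ⟨Subtype.val, continuous_subtype_val⟩ := by
  constructor
  · intro hU
    obtain ⟨G, hG1, hG2⟩ := fibSection r hr pX pY f U hU
    refine ⟨⟨fun x => ⟨((x:X), ⟨(pX (x:X), G.curry x), fun t => hG1 x t⟩),
        fun i => (hG2 x i).symm⟩, ?_⟩, fun x => rfl, ?_⟩
    · apply Continuous.subtype_mk
      apply Continuous.prodMk continuous_subtype_val
      apply Continuous.subtype_mk
      exact Continuous.prodMk (hpX.comp continuous_subtype_val) G.curry.continuous
    · exact ⟨ContinuousMap.Homotopy.mk
        ⟨fun p => (p.2 : X), continuous_subtype_val.comp continuous_snd⟩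
        (fun x => rfl) (fun x => rfl), fun x t => rfl⟩
  · rintro ⟨s, hs, H, hHfib⟩ a b
    have hfib : ∀ (x : U) (u : unitInterval), pY ((s x).1.2.1.2 u) = pX (x:X) := by
      intro x u
      have h1 := (s x).1.2.2 u
      have h2 := (s x).1.2.2 (evalTime r a)
      have h3 := (s x).2 a
      rw [h1, ← h2, ← h3, hf]
      exact hs x
    let M : Fin r → C(U, Y) := fun c =>
      ⟨fun x => f c ((s x).1.1),
        (f c).continuous.comp (continuous_fst.comp (continuous_subtype_val.comp s.continuous))⟩
    let HA : ((f a).restrict U).Homotopy (M a) :=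
      ContinuousMap.Homotopy.mk
        ⟨fun p => f a (H (unitInterval.symm p.1, p.2)),
          (f a).continuous.comp (H.continuous.comp
            ((unitInterval.continuous_symm.comp continuous_fst).prodMk continuous_snd))⟩
        (fun x => by
          show f a (H (unitInterval.symm 0, x)) = _
          rw [unitInterval.symm_zero, H.apply_one]
          rfl)
        (fun x => by
          show f a (H (unitInterval.symm 1, x)) = M a x
          rw [unitInterval.symm_one, H.apply_zero]
          rfl)
    let HB : (M b).Homotopy ((f b).restrict U) :=
      ContinuousMap.Homotopy.mk
        ⟨fun p => f b (H p), (f b).continuous.comp H.continuous⟩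
        (fun x => by
          show f b (H (0, x)) = M b x
          rw [H.apply_zero]
          rfl)
        (fun x => by
          show f b (H (1, x)) = _
          rw [H.apply_one]
          rfl)
    have hmem : ∀ t : unitInterval, (1 - (t:ℝ)) * ((evalTime r a : unitInterval):ℝ)
        + (t:ℝ) * ((evalTime r b : unitInterval):ℝ) ∈ unitInterval := by
      intro t
      constructor
      · exact add_nonneg (mul_nonneg (by linarith [t.2.2]) (evalTime r a).2.1)
          (mul_nonneg t.2.1 (evalTime r b).2.1)
      · nlinarith [t.2.1, t.2.2, (evalTime r a).2.1, (evalTime r a).2.2,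
          (evalTime r b).2.1, (evalTime r b).2.2]
    let σab : unitInterval → unitInterval := fun t => ⟨_, hmem t⟩
    have hσc : Continuous σab := Continuous.subtype_mk
      (((continuous_const.sub continuous_subtype_val).mul continuous_const).add
        (continuous_subtype_val.mul continuous_const)) _
    have hσ0 : σab 0 = evalTime r a := Subtype.ext (by simp [σab])
    have hσ1 : σab 1 = evalTime r b := Subtype.ext (by simp [σab])
    let K : (M a).Homotopy (M b) :=
      ContinuousMap.Homotopy.mk
        ⟨fun p => (s p.2).1.2.1.2 (σab p.1), by
          have h1 : Continuous fun p : unitInterval × U =>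
              ((((s p.2).1.2.1.2 : C(unitInterval, Y)), σab p.1) :
                C(unitInterval, Y) × unitInterval) :=
            (continuous_snd.comp (continuous_subtype_val.comp (continuous_snd.comp
              (continuous_subtype_val.comp (s.continuous.comp continuous_snd))))).prodMk
              (hσc.comp continuous_fst)
          exact ContinuousEval.continuous_eval.comp h1⟩
        (fun x => by
          show (s x).1.2.1.2 (σab 0) = M a x
          rw [hσ0]
          exact ((s x).2 a).symm)
        (fun x => by
          show (s x).1.2.1.2 (σab 1) = M b x
          rw [hσ1]
          exact ((s x).2 b).symm)
    have pHA : ∀ (x : U) (t : unitInterval), pY (HA (t, x)) = pX (x:X) := by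
      intro x t
      show pY (f a (H (unitInterval.symm t, x))) = pX (x:X)
      rw [hf]
      exact hHfib x _
    have pHB : ∀ (x : U) (t : unitInterval), pY (HB (t, x)) = pX (x:X) := by
      intro x t
      show pY (f b (H (t, x))) = pX (x:X)
      rw [hf]
      exact hHfib x _
    have pK : ∀ (x : U) (t : unitInterval), pY (K (t, x)) = pX (x:X) := by
      intro x t
      show pY ((s x).1.2.1.2 (σab t)) = pX (x:X)
      exact hfib x _
    refine ⟨(HA.trans K).trans HB, ?_⟩
    intro x t
    rw [ContinuousMap.Homotopy.trans_apply]
    split_ifs with h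
    · rw [ContinuousMap.Homotopy.trans_apply]
      split_ifs with h2
      · exact pHA x _
      · exact pK x _
    · exact pHB x _

/-- `D_B(f_1,…,f_r)` equals the fibrewise sectional category of the pullback
`Π̃_{r,Y} : P_B(f_1,…,f_r) → X` of the evaluation fibration `Π_{r,Y}` along `(f_1,…,f_r)`. -/
theorem stmt15 {B X Y : Type*} [TopologicalSpace B] [TopologicalSpace X] [TopologicalSpace Y]
    (r : ℕ) (hr : 2 ≤ r) (pX : X → B) (pY : Y → B)
    (hpX : Continuous pX) (hpY : Continuous pY)
    (f : Fin r → C(X, Y)) (hf : ∀ i x, pY (f i x) = pX x) :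
    fibDist pX pY f =
      fibSecat
        (fun w : {w : X × FibPathSpace pY //
            ∀ i : Fin r, f i w.1 = w.2.1.2 (evalTime r i)} => pX w.1.1)
        pX
        ⟨fun w => w.1.1, continuous_fst.comp continuous_subtype_val⟩ := by
  unfold fibDist fibSecat
  congr 1
  ext n
  simp only [Set.mem_setOf_eq]
  constructor
  · rintro ⟨k, hk, U, hUo, hUc, h⟩
    exact ⟨k, hk, U, hUo, hUc, fun i =>
      (fib_key r hr pX pY hpX f hf (U i)).mp (h i)⟩
  · rintro ⟨k, hk, U, hUo, hUc, h⟩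
    exact ⟨k, hk, U, hUo, hUc, fun i =>
      (fib_key r hr pX pY hpX f hf (U i)).mpr (h i)⟩
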